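/- Every weak logic ⊢ is complete with respect to the class of bimatrices M(⊢): Γ ⊢ φ if and only if Γ ⊨c_{M(⊢)} φ. -/

import Mathlib

inductive Fm (L : ℕ → Type) : Type
  | var : ℕ → Fm L
  | op : {n : ℕ} → L n → (Fin n → Fm L) → Fm L

variable {L : ℕ → Type}

def Fm.subst (σ : ℕ → Fm L) : Fm L → Fm L
  | .var p => σ p
  | .op f ts => .op f (fun i => (ts i).subst σ)

/-- An atomic substitution maps atoms to atoms. -/
def Atomic (σ : ℕ → Fm L) : Prop := ∀ p, ∃ q, σ p = Fm.var q

abbrev Eqn (L : ℕ → Type) := Fm L × Fm L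

def substEq (σ : ℕ → Fm L) (e : Eqn L) : Eqn L := (e.1.subst σ, e.2.subst σ)

/-- A logical bimatrix: an algebra with designated truth and core subsets. -/
structure Bimatrix (L : ℕ → Type) : Type 1 where
  carrier : Type
  interp : {n : ℕ} → L n → (Fin n → carrier) → carrier
  truth : Set carrier
  core : Set carrier

def Bimatrix.eval (M : Bimatrix L) (h : ℕ → M.carrier) : Fm L → M.carrier
  | .var p => h p
  | .op f ts => M.interp f (fun i => M.eval h (ts i))

/-- The core consequence relation induced by a class of bimatrices. -/
def CoreMatCons (K : Set (Bimatrix L)) (Γ : Set (Fm L)) (φ : Fm L) : Prop :=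
  ∀ M ∈ K, ∀ h : ℕ → M.carrier, (∀ p, h p ∈ M.core) →
    (∀ γ ∈ Γ, M.eval h γ ∈ M.truth) → M.eval h φ ∈ M.truth

def IsConsRel (Der : Set (Fm L) → Fm L → Prop) : Prop :=
  (∀ Γ φ, φ ∈ Γ → Der Γ φ) ∧
  (∀ (Γ Δ : Set (Fm L)) (ψ : Fm L), (∀ φ ∈ Δ, Der Γ φ) → Der Δ ψ → Der Γ ψ)

def ClosedUnderAtomic (Der : Set (Fm L) → Fm L → Prop) : Prop :=
  ∀ σ : ℕ → Fm L, Atomic σ → ∀ Γ φ, Der Γ φ → Der (Fm.subst σ '' Γ) (Fm.subst σ φ)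

def Finitary (Der : Set (Fm L) → Fm L → Prop) : Prop :=
  ∀ Γ φ, Der Γ φ → ∃ Δ : Set (Fm L), Δ ⊆ Γ ∧ Δ.Finite ∧ Der Δ φ

/-- A weak logic: a finitary consequence relation closed under atomic substitutions. -/
def IsWeakLogic (Der : Set (Fm L) → Fm L → Prop) : Prop :=
  IsConsRel Der ∧ ClosedUnderAtomic Der ∧ Finitary Der

/-- The substitution replacing only the atom `p` by `ψ`. -/
def substOne (p : ℕ) (ψ : Fm L) : ℕ → Fm L := fun q => if q = p then ψ else Fm.var q

/-- The core of a weak logic: formulas that may be substituted for any single atom. -/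
def CoreFm (Der : Set (Fm L) → Fm L → Prop) : Set (Fm L) :=
  {ψ | ∀ (Γ : Set (Fm L)) (φ : Fm L) (p : ℕ), Der Γ φ →
    Der (Fm.subst (substOne p ψ) '' Γ) (Fm.subst (substOne p ψ) φ)}

/-- The Lindenbaum bimatrix `M(⊢,Γ)`: domain the term algebra, truth set the
deductive closure of `Γ`, core the core of `⊢`. -/
def LindMat (Der : Set (Fm L) → Fm L → Prop) (Γ : Set (Fm L)) : Bimatrix L :=
  ⟨Fm L, fun f ts => Fm.op f ts, {φ | Der Γ φ}, CoreFm Der⟩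

-- auxiliary section to splice in
def Fm.atoms : Fm L → Finset ℕ
  | .var p => {p}
  | .op _ ts => Finset.univ.biUnion (fun i => (ts i).atoms)

lemma Fm.subst_congr {σ τ : ℕ → Fm L} : ∀ φ : Fm L,
    (∀ p ∈ φ.atoms, σ p = τ p) → φ.subst σ = φ.subst τ
  | .var p, h => h p (by simp [Fm.atoms])
  | .op f ts, h => by
      simp only [Fm.subst]
      congr 1
      funext i
      exact Fm.subst_congr (ts i) (fun p hp => h p (by
        simp [Fm.atoms]; exact ⟨i, hp⟩))

lemma Fm.subst_id : ∀ φ : Fm L, φ.subst Fm.var = φ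
  | .var p => rfl
  | .op f ts => by
      simp only [Fm.subst]
      congr 1
      funext i
      exact Fm.subst_id (ts i)

lemma Fm.subst_comp (σ τ : ℕ → Fm L) : ∀ φ : Fm L,
    (φ.subst σ).subst τ = φ.subst (fun p => (σ p).subst τ)
  | .var p => rfl
  | .op f ts => by
      simp only [Fm.subst]
      congr 1
      funext i
      exact Fm.subst_comp σ τ (ts i)

lemma Fm.subst_one_fresh {p : ℕ} {ψ : Fm L} {φ : Fm L} (h : p ∉ φ.atoms) :
    φ.subst (substOne p ψ) = φ := by
  rw [Fm.subst_congr φ (τ := Fm.var) (fun q hq => by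
    have : q ≠ p := fun e => h (e ▸ hq)
    simp [substOne, this])]
  exact Fm.subst_id φ

def substList : List (ℕ × Fm L) → Fm L → Fm L
  | [], φ => φ
  | (p, ψ) :: rest, φ => substList rest (φ.subst (substOne p ψ))

lemma substList_fresh : ∀ (l : List (ℕ × Fm L)) (φ : Fm L),
    (∀ pr ∈ l, pr.1 ∉ φ.atoms) → substList l φ = φ
  | [], φ, _ => rfl
  | (p, ψ) :: rest, φ, h => by
      simp only [substList]
      rw [Fm.subst_one_fresh (h (p, ψ) List.mem_cons_self)]
      exact substList_fresh rest φ (fun pr hpr => h pr (List.mem_cons_of_mem _ hpr))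

lemma substList_subst : ∀ (l : List (ℕ × Fm L)) (φ : Fm L),
    substList l φ = φ.subst (fun q => substList l (Fm.var q))
  | [], φ => (Fm.subst_id φ).symm
  | (p, ψ) :: rest, φ => by
      simp only [substList]
      rw [substList_subst rest (φ.subst (substOne p ψ)), Fm.subst_comp]
      congr 1
      funext q
      rw [← substList_subst rest]
      rfl

lemma substList_var_eq (h : ℕ → Fm L) (N : ℕ) :
    ∀ (l0 : List ℕ), (∀ p ∈ l0, ∀ a ∈ (h p).atoms, a < N) →
    ∀ q ∈ l0, substList (l0.map fun p => (N + p, h p)) (Fm.var (N + q)) = h q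
  | [], _, q, hq => absurd hq List.not_mem_nil
  | p₀ :: rest, hlt, q, hq => by
      simp only [List.map, substList]
      by_cases e : q = p₀
      · subst e
        have : (Fm.var (N + q) : Fm L).subst (substOne (N + q) (h q)) = h q := by
          simp [Fm.subst, substOne]
        rw [this]
        apply substList_fresh
        intro pr hpr
        rcases List.mem_map.mp hpr with ⟨p', hp', rfl⟩
        intro hmem
        have := hlt q List.mem_cons_self _ hmem
        omega
      · have : (Fm.var (N + q) : Fm L).subst (substOne (N + p₀) (h p₀)) = Fm.var (N + q) := by
          have : N + q ≠ N + p₀ := by omega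
          simp [Fm.subst, substOne, this, e]
        rw [this]
        exact substList_var_eq h N rest
          (fun p hp => hlt p (List.mem_cons_of_mem _ hp))
          q ((List.mem_cons.mp hq).resolve_left e)

lemma substList_core {Der : Set (Fm L) → Fm L → Prop} :
    ∀ (l : List (ℕ × Fm L)), (∀ pr ∈ l, pr.2 ∈ CoreFm Der) →
    ∀ (Γ : Set (Fm L)) (φ : Fm L), Der Γ φ →
    Der (substList l '' Γ) (substList l φ)
  | [], _, Γ, φ, hd => by simpa [substList] using hd
  | (p, ψ) :: rest, hc, Γ, φ, hd => by
      have h1 := hc (p, ψ) List.mem_cons_self Γ φ p hd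
      have h2 := substList_core rest (fun pr hpr => hc pr (List.mem_cons_of_mem _ hpr))
        _ _ h1
      simp only [substList]
      rwa [Set.image_image] at h2

lemma eval_lind {Der : Set (Fm L) → Fm L → Prop} {Δ : Set (Fm L)} (h : ℕ → Fm L) :
    ∀ φ : Fm L, (LindMat Der Δ).eval h φ = φ.subst h
  | .var p => rfl
  | .op f ts => by
      simp only [Bimatrix.eval, Fm.subst, LindMat]
      congr 1
      funext i
      exact eval_lind h (ts i)

lemma core_subst_finite {Der : Set (Fm L) → Fm L → Prop} (hW : IsWeakLogic Der)
    (h : ℕ → Fm L) (hc : ∀ p, h p ∈ CoreFm Der) (Δ : Set (Fm L)) (hfin : Δ.Finite)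
    (φ : Fm L) (hd : Der Δ φ) : Der (Fm.subst h '' Δ) (Fm.subst h φ) := by
  classical
  set A : Finset ℕ := φ.atoms ∪ hfin.toFinset.sup Fm.atoms with hA
  have hγA : ∀ γ ∈ Δ, γ.atoms ⊆ A := by
    intro γ hγ
    exact Finset.Subset.trans (Finset.le_sup (hfin.mem_toFinset.mpr hγ))
      (Finset.subset_union_right)
  have hφA : φ.atoms ⊆ A := Finset.subset_union_left
  set B : Finset ℕ := A ∪ A.sup (fun p => (h p).atoms) with hB
  set N : ℕ := B.sup id + 1 with hN
  have hBN : ∀ a ∈ B, a < N := by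
    intro a ha
    have : a ≤ B.sup id := Finset.le_sup (f := id) ha
    omega
  have hhN : ∀ p ∈ A, ∀ a ∈ (h p).atoms, a < N := by
    intro p hp a ha
    have hsub : (h p).atoms ≤ A.sup (fun p => (h p).atoms) := Finset.le_sup (f := fun p => (h p).atoms) hp
    rw [Finset.le_iff_subset] at hsub
    exact hBN a (Finset.mem_union_right _ (hsub ha))
  set σ : ℕ → Fm L := fun p => Fm.var (N + p) with hσ
  have hσa : Atomic σ := fun p => ⟨N + p, rfl⟩
  have h1 : Der (Fm.subst σ '' Δ) (Fm.subst σ φ) := hW.2.1 σ hσa Δ φ hd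
  set l : List (ℕ × Fm L) := A.toList.map (fun p => (N + p, h p)) with hl
  have hlc : ∀ pr ∈ l, pr.2 ∈ CoreFm Der := by
    intro pr hpr
    rcases List.mem_map.mp hpr with ⟨p, _, rfl⟩
    exact hc p
  have h2 := substList_core l hlc _ _ h1
  have key : ∀ ψ : Fm L, ψ.atoms ⊆ A → substList l (ψ.subst σ) = ψ.subst h := by
    intro ψ hψ
    rw [substList_subst, Fm.subst_comp]
    apply Fm.subst_congr
    intro q hq
    show substList l (σ q) = h q
    rw [hσ]
    exact substList_var_eq h N A.toList
      (fun p hp => hhN p (Finset.mem_toList.mp hp))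
      q (Finset.mem_toList.mpr (hψ hq))
  rw [Set.image_image] at h2
  rw [key φ hφA] at h2
  -- replace image
  refine hW.1.2 _ _ _ ?_ h2
  intro χ hχ
  rcases hχ with ⟨γ, hγ, rfl⟩
  show Der (Fm.subst h '' Δ) (substList l (Fm.subst σ γ))
  rw [key γ (hγA γ hγ)]
  exact hW.1.1 _ _ ⟨γ, hγ, rfl⟩

/-- every weak logic is complete with respect to its class of
Lindenbaum bimatrices `M(⊢)`. -/
theorem weak_logic_complete_wrt_bimatrices (Der : Set (Fm L) → Fm L → Prop)
    (hW : IsWeakLogic Der) (Γ : Set (Fm L)) (φ : Fm L) :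
    Der Γ φ ↔ CoreMatCons {M | ∃ Δ : Set (Fm L), M = LindMat Der Δ} Γ φ := by
  constructor
  · intro hd
    intro M hM h hcore hprem
    rcases hM with ⟨Δ, rfl⟩
    rcases hW.2.2 Γ φ hd with ⟨Δ', hsub, hfin, hd'⟩
    have h2 := core_subst_finite hW h hcore Δ' hfin φ hd'
    show Der Δ ((LindMat Der Δ).eval h φ)
    erw [eval_lind]
    refine hW.1.2 _ _ _ ?_ h2
    intro χ hχ
    rcases hχ with ⟨γ, hγ, rfl⟩
    have := hprem γ (hsub hγ)
    erw [eval_lind] at this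
    exact this
  · intro hc
    have hvar : ∀ q : ℕ, (Fm.var q : Fm L) ∈ CoreFm Der := by
      intro q Γ' φ' p hD
      refine hW.2.1 (substOne p (Fm.var q)) ?_ Γ' φ' hD
      intro r
      by_cases e : r = p
      · exact ⟨q, by simp [substOne, e]⟩
      · exact ⟨r, by simp [substOne, e]⟩
    have := hc (LindMat Der Γ) ⟨Γ, rfl⟩ Fm.var hvar ?_
    · rwa [eval_lind, Fm.subst_id] at this
    · intro γ hγ
      show Der Γ ((LindMat Der Γ).eval Fm.var γ)
      rw [eval_lind, Fm.subst_id]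
      exact hW.1.1 _ _ hγ
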